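/- Let c, g ∈ ℝ and let (φ, y) : I → ℝ² be differentiable on an open interval I ⊆ ℝ satisfying the regularized travelling-wave system dφ/dζ = 2φ(ζ)y(ζ), dy/dζ = φ(ζ)² − cφ(ζ) − g − 2y(ζ)² for all ζ ∈ I. Then the function ζ ↦ H(φ(ζ), y(ζ)) is constant on I, where H(φ,y) = φ²(y² − φ²/4 + (c/3)φ + g/2). -/

import Mathlib

/-- Along any solution of the regularized travelling-wave system
`dφ/dζ = 2φy`, `dy/dζ = φ² − cφ − g − 2y²` on an open interval `I`, the function
`H(φ,y) = φ²(y² − φ²/4 + (c/3)φ + g/2)` is constant. -/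
theorem osmosis_K22_regularized_first_integral
    (c g : ℝ) (I : Set ℝ) (hI : IsOpen I) (hIconv : Convex ℝ I)
    (φ y : ℝ → ℝ)
    (hφ : ∀ ζ ∈ I, HasDerivAt φ (2 * φ ζ * y ζ) ζ)
    (hy : ∀ ζ ∈ I, HasDerivAt y ((φ ζ) ^ 2 - c * φ ζ - g - 2 * (y ζ) ^ 2) ζ)
    (H : ℝ → ℝ → ℝ)
    (hH : ∀ p q : ℝ, H p q = p ^ 2 * (q ^ 2 - p ^ 2 / 4 + (c / 3) * p + g / 2)) :
    ∃ h : ℝ, ∀ ζ ∈ I, H (φ ζ) (y ζ) = h := by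
  rcases I.eq_empty_or_nonempty with hE | ⟨ζ0, hζ0⟩
  · exact ⟨0, by simp [hE]⟩
  have key : ∀ t ∈ I, HasDerivAt (fun s => H (φ s) (y s)) 0 t := by
    intro t ht
    have h1 := hφ t ht
    have h2 := hy t ht
    have hder : HasDerivAt (fun s => (φ s) ^ 2 *
        ((y s) ^ 2 - (φ s) ^ 2 / 4 + (c / 3) * (φ s) + g / 2)) 0 t := by
      have hφ2 : HasDerivAt (fun s => (φ s) ^ 2)
          ((2 : ℝ) * φ t ^ 1 * (2 * φ t * y t)) t := h1.pow 2
      have hy2 : HasDerivAt (fun s => (y s) ^ 2)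
          ((2 : ℝ) * y t ^ 1 * ((φ t) ^ 2 - c * φ t - g - 2 * (y t) ^ 2)) t := h2.pow 2
      have hin := ((hy2.sub (hφ2.div_const 4)).add
        (h1.const_mul (c / 3))).add_const (g / 2)
      have : HasDerivAt (fun s => (φ s) ^ 2 *
          ((y s) ^ 2 - (φ s) ^ 2 / 4 + (c / 3) * (φ s) + g / 2)) _ t := hφ2.mul hin
      convert this using 1
      ring
    have : (fun s => H (φ s) (y s)) = fun s => (φ s) ^ 2 *
        ((y s) ^ 2 - (φ s) ^ 2 / 4 + (c / 3) * (φ s) + g / 2) := by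
      funext s; exact hH _ _
    rw [this]
    exact hder
  refine ⟨H (φ ζ0) (y ζ0), fun ζ hζ => ?_⟩
  have hdiff : DifferentiableOn ℝ (fun s => H (φ s) (y s)) I :=
    fun t ht => ((key t ht).differentiableAt).differentiableWithinAt
  refine hIconv.is_const_of_fderivWithin_eq_zero hdiff (fun t ht => ?_) hζ hζ0
  rw [fderivWithin_eq_fderiv (hI.uniqueDiffOn t ht) (key t ht).differentiableAt,
    (key t ht).hasFDerivAt.fderiv]
  ext
  simp
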